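/- Estimated variances of the least-squares slopes for the transformed data: let n ≥ 4 and let e₁, X̃ = (x₁, x₂, 0, …, 0) with x₂ > 0, M̃ = (m₁, m₂, m₃, 0, …, 0) with m₃ > 0, and Ỹ = (y₁, y₂, y₃, y₄, 0, …, 0) be as in the transformed mediation model. Then: (i) in the regression of M̃ on the design (e₁, X̃), the estimated variance of the slope coefficient, defined as s²·(G⁻¹)₂₂ with G the 2×2 Gram matrix of (e₁, X̃) and s² = ‖M̃ − M̃_{(e₁,X̃)}‖²/(n−2), equals m₃²/((n−2)x₂²); (ii) in the regression of Ỹ on the design (e₁, M̃, X̃), the estimated variance of the coefficient of M̃, defined as s²·(G⁻¹)_{MM} with G the 3×3 Gram matrix of (e₁, M̃, X̃) and s² = ‖Ỹ − Ỹ_{(e₁,M̃,X̃)}‖²/(n−3), equals y₄²/((n−3)m₃²). -/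

import Mathlib

private lemma sum_four' {n : ℕ} (hn : 4 ≤ n) (f : Fin n → ℝ)
    (hf : ∀ i : Fin n, 4 ≤ (i : ℕ) → f i = 0) :
    ∑ i, f i = f ⟨0, Nat.lt_of_lt_of_le (by norm_num) hn⟩ + f ⟨1, Nat.lt_of_lt_of_le (by norm_num) hn⟩ + f ⟨2, Nat.lt_of_lt_of_le (by norm_num) hn⟩ + f ⟨3, Nat.lt_of_lt_of_le (by norm_num) hn⟩ := by
  have h : ∑ i, f i = ∑ i ∈ ({⟨0, Nat.lt_of_lt_of_le (by norm_num) hn⟩, ⟨1, Nat.lt_of_lt_of_le (by norm_num) hn⟩, ⟨2, Nat.lt_of_lt_of_le (by norm_num) hn⟩, ⟨3, Nat.lt_of_lt_of_le (by norm_num) hn⟩} :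
      Finset (Fin n)), f i := by
    refine (Finset.sum_subset (Finset.subset_univ _) fun i _ hi => hf i ?_).symm
    simp only [Finset.mem_insert, Finset.mem_singleton, Fin.ext_iff] at hi
    omega
  rw [h, Finset.sum_insert (by simp [Fin.ext_iff]), Finset.sum_insert (by simp [Fin.ext_iff]),
    Finset.sum_insert (by simp [Fin.ext_iff]), Finset.sum_singleton]
  ring

private lemma inner_formula' {n : ℕ} (hn : 4 ≤ n) (v w : EuclideanSpace ℝ (Fin n))
    (hv : ∀ i : Fin n, 4 ≤ (i : ℕ) → v i = 0) :
    (inner ℝ v w : ℝ) = v ⟨0, Nat.lt_of_lt_of_le (by norm_num) hn⟩ * w ⟨0, Nat.lt_of_lt_of_le (by norm_num) hn⟩ + v ⟨1, Nat.lt_of_lt_of_le (by norm_num) hn⟩ * w ⟨1, Nat.lt_of_lt_of_le (by norm_num) hn⟩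
      + v ⟨2, Nat.lt_of_lt_of_le (by norm_num) hn⟩ * w ⟨2, Nat.lt_of_lt_of_le (by norm_num) hn⟩ + v ⟨3, Nat.lt_of_lt_of_le (by norm_num) hn⟩ * w ⟨3, Nat.lt_of_lt_of_le (by norm_num) hn⟩ := by
  have : (inner ℝ v w : ℝ) = ∑ i, v i * w i := by
    simp [PiLp.inner_apply, RCLike.inner_apply, conj_trivial, mul_comm]
  rw [this, sum_four' hn _ (fun i hi => by rw [hv i hi, zero_mul])]



/-- Estimated variances of the least-squares slopes for the transformed data: for `n ≥ 4`
and the transformed vectors `e₁`, `X̃ = (x₁,x₂,0,…,0)` with `x₂ > 0`,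
`M̃ = (m₁,m₂,m₃,0,…,0)` with `m₃ > 0`, `Ỹ = (y₁,y₂,y₃,y₄,0,…,0)` with `y₄ > 0`:
(i) in the regression of `M̃` on `(e₁, X̃)` the estimated variance of the slope,
`s²·(G₂⁻¹)₂₂` with `G₂` the Gram matrix of `(e₁, X̃)` and
`s² = ‖M̃ − M̃_{(e₁,X̃)}‖²/(n−2)`, equals `m₃²/((n−2)x₂²)`;
(ii) in the regression of `Ỹ` on `(e₁, M̃, X̃)` the estimated variance of the coefficient
of `M̃`, `s²·(G₃⁻¹)_{MM}` with `G₃` the Gram matrix of `(e₁, M̃, X̃)` and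
`s² = ‖Ỹ − Ỹ_{(e₁,M̃,X̃)}‖²/(n−3)`, equals `y₄²/((n−3)m₃²)`. -/
theorem estimated_variances_transformed_data
    (n : ℕ) (hn : 4 ≤ n) (x₁ x₂ m₁ m₂ m₃ y₁ y₂ y₃ y₄ : ℝ)
    (hx₂ : 0 < x₂) (hm₃ : 0 < m₃) (hy₄ : 0 < y₄)
    (e₁ X M Y : EuclideanSpace ℝ (Fin n))
    (he₁ : e₁ = fun i => if i = (⟨0, by omega⟩ : Fin n) then (1 : ℝ) else 0)
    (hX : X = fun i => if i = (⟨0, by omega⟩ : Fin n) then x₁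
      else if i = (⟨1, by omega⟩ : Fin n) then x₂ else 0)
    (hM : M = fun i => if i = (⟨0, by omega⟩ : Fin n) then m₁
      else if i = (⟨1, by omega⟩ : Fin n) then m₂
      else if i = (⟨2, by omega⟩ : Fin n) then m₃ else 0)
    (hY : Y = fun i => if i = (⟨0, by omega⟩ : Fin n) then y₁
      else if i = (⟨1, by omega⟩ : Fin n) then y₂
      else if i = (⟨2, by omega⟩ : Fin n) then y₃
      else if i = (⟨3, by omega⟩ : Fin n) then y₄ else 0)
    (PM PY : EuclideanSpace ℝ (Fin n))
    (hPM : PM = (Submodule.orthogonalProjectionOnto (Submodule.span ℝ {e₁, X}) M : EuclideanSpace ℝ (Fin n)))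
    (hPY : PY =
      (Submodule.orthogonalProjectionOnto (Submodule.span ℝ {e₁, M, X}) Y : EuclideanSpace ℝ (Fin n)))
    (G₂ : Matrix (Fin 2) (Fin 2) ℝ) (G₃ : Matrix (Fin 3) (Fin 3) ℝ)
    (hG₂ : G₂ = Matrix.of ![![(inner ℝ e₁ e₁ : ℝ), (inner ℝ e₁ X : ℝ)],
                            ![(inner ℝ X e₁ : ℝ), (inner ℝ X X : ℝ)]])
    (hG₃ : G₃ = Matrix.of ![![(inner ℝ e₁ e₁ : ℝ), (inner ℝ e₁ M : ℝ), (inner ℝ e₁ X : ℝ)],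
                            ![(inner ℝ M e₁ : ℝ), (inner ℝ M M : ℝ), (inner ℝ M X : ℝ)],
                            ![(inner ℝ X e₁ : ℝ), (inner ℝ X M : ℝ), (inner ℝ X X : ℝ)]]) :
    (‖M - PM‖ ^ 2 / ((n : ℝ) - 2)) * (G₂⁻¹ 1 1) = m₃ ^ 2 / (((n : ℝ) - 2) * x₂ ^ 2) ∧
    (‖Y - PY‖ ^ 2 / ((n : ℝ) - 3)) * (G₃⁻¹ 1 1) = y₄ ^ 2 / (((n : ℝ) - 3) * m₃ ^ 2) := by
  have hx₂' : x₂ ≠ 0 := ne_of_gt hx₂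
  have hm₃' : m₃ ≠ 0 := ne_of_gt hm₃
  -- support lemmas
  have hsE : ∀ i : Fin n, 4 ≤ (i : ℕ) → e₁ i = 0 := by
    intro i hi
    have h0 : i ≠ (⟨0, by omega⟩ : Fin n) := by simp [Fin.ext_iff]; omega
    simp only [he₁]; rw [if_neg h0]
  have hsX : ∀ i : Fin n, 4 ≤ (i : ℕ) → X i = 0 := by
    intro i hi
    have h0 : i ≠ (⟨0, by omega⟩ : Fin n) := by simp [Fin.ext_iff]; omega
    have h1 : i ≠ (⟨1, by omega⟩ : Fin n) := by simp [Fin.ext_iff]; omega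
    simp only [hX]; rw [if_neg h0, if_neg h1]
  have hsM : ∀ i : Fin n, 4 ≤ (i : ℕ) → M i = 0 := by
    intro i hi
    have h0 : i ≠ (⟨0, by omega⟩ : Fin n) := by simp [Fin.ext_iff]; omega
    have h1 : i ≠ (⟨1, by omega⟩ : Fin n) := by simp [Fin.ext_iff]; omega
    have h2 : i ≠ (⟨2, by omega⟩ : Fin n) := by simp [Fin.ext_iff]; omega
    simp only [hM]; rw [if_neg h0, if_neg h1, if_neg h2]
  have hsY : ∀ i : Fin n, 4 ≤ (i : ℕ) → Y i = 0 := by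
    intro i hi
    have h0 : i ≠ (⟨0, by omega⟩ : Fin n) := by simp [Fin.ext_iff]; omega
    have h1 : i ≠ (⟨1, by omega⟩ : Fin n) := by simp [Fin.ext_iff]; omega
    have h2 : i ≠ (⟨2, by omega⟩ : Fin n) := by simp [Fin.ext_iff]; omega
    have h3 : i ≠ (⟨3, by omega⟩ : Fin n) := by simp [Fin.ext_iff]; omega
    simp only [hY]; rw [if_neg h0, if_neg h1, if_neg h2, if_neg h3]
  -- inner ℝ products
  have hee : (inner ℝ e₁ e₁ : ℝ) = 1 := by
    rw [inner_formula' hn _ _ hsE]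
    simp [he₁, Fin.ext_iff]
  have heX : (inner ℝ e₁ X : ℝ) = x₁ := by
    rw [inner_formula' hn _ _ hsE]
    simp [he₁, hX, Fin.ext_iff]
  have hXe : (inner ℝ X e₁ : ℝ) = x₁ := by
    rw [inner_formula' hn _ _ hsX]
    simp [he₁, hX, Fin.ext_iff]
  have hXX : (inner ℝ X X : ℝ) = x₁ ^ 2 + x₂ ^ 2 := by
    rw [inner_formula' hn _ _ hsX]
    simp [hX, Fin.ext_iff]; ring
  have heM : (inner ℝ e₁ M : ℝ) = m₁ := by
    rw [inner_formula' hn _ _ hsE]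
    simp [he₁, hM, Fin.ext_iff]
  have hMe : (inner ℝ M e₁ : ℝ) = m₁ := by
    rw [inner_formula' hn _ _ hsM]
    simp [he₁, hM, Fin.ext_iff]
  have hMM : (inner ℝ M M : ℝ) = m₁ ^ 2 + m₂ ^ 2 + m₃ ^ 2 := by
    rw [inner_formula' hn _ _ hsM]
    simp [hM, Fin.ext_iff]; ring
  have hMX : (inner ℝ M X : ℝ) = m₁ * x₁ + m₂ * x₂ := by
    rw [inner_formula' hn _ _ hsM]
    simp [hM, hX, Fin.ext_iff]
  have hXM : (inner ℝ X M : ℝ) = m₁ * x₁ + m₂ * x₂ := by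
    rw [inner_formula' hn _ _ hsX]
    simp [hM, hX, Fin.ext_iff]; ring
  -- part (i): projection of M
  have hMp : M - ((m₁ - (m₂ / x₂) * x₁) • e₁ + (m₂ / x₂) • X) =
      (WithLp.toLp 2 (fun i => if i = (⟨2, by omega⟩ : Fin n) then m₃ else 0) : EuclideanSpace ℝ (Fin n)) := by
    ext i
    simp only [PiLp.sub_apply, PiLp.add_apply, PiLp.smul_apply, smul_eq_mul, he₁, hX, hM]
    by_cases h0 : i = (⟨0, by omega⟩ : Fin n)
    · simp [h0, Fin.ext_iff]
      try field_simp
      try ring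
    · by_cases h1 : i = (⟨1, by omega⟩ : Fin n)
      · simp [h0, h1, Fin.ext_iff]
        try field_simp
        try ring
      · by_cases h2 : i = (⟨2, by omega⟩ : Fin n)
        · simp [h0, h1, h2, Fin.ext_iff]
        · simp [h0, h1, h2]
  have hsZ2 : ∀ i : Fin n, 4 ≤ (i : ℕ) →
      (WithLp.toLp 2 (fun i => if i = (⟨2, by omega⟩ : Fin n) then m₃ else 0) : EuclideanSpace ℝ (Fin n)) i = 0 := by
    intro i hi
    have h2 : i ≠ (⟨2, by omega⟩ : Fin n) := by simp [Fin.ext_iff]; omega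
    simp [h2]
  have hZ2e : (inner ℝ (M - ((m₁ - (m₂ / x₂) * x₁) • e₁ + (m₂ / x₂) • X)) e₁ : ℝ) = 0 := by
    rw [hMp, inner_formula' hn _ _ hsZ2]
    simp [he₁, Fin.ext_iff]
  have hZ2X : (inner ℝ (M - ((m₁ - (m₂ / x₂) * x₁) • e₁ + (m₂ / x₂) • X)) X : ℝ) = 0 := by
    rw [hMp, inner_formula' hn _ _ hsZ2]
    simp [hX, Fin.ext_iff]
  have hPMv : PM = (m₁ - (m₂ / x₂) * x₁) • e₁ + (m₂ / x₂) • X := by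
    rw [hPM]
    refine Submodule.eq_starProjection_of_mem_of_inner_eq_zero ?_ ?_
    · exact Submodule.add_mem _
        (Submodule.smul_mem _ _ (Submodule.subset_span (by simp)))
        (Submodule.smul_mem _ _ (Submodule.subset_span (by simp)))
    · intro w hw
      induction hw using Submodule.span_induction with
      | mem x hx =>
        rcases hx with h | h
        · rw [h]; exact hZ2e
        · rw [Set.mem_singleton_iff.mp h]; exact hZ2X
      | zero => exact inner_zero_right _
      | add x y _ _ hx hy => rw [inner_add_right, hx, hy, add_zero]
      | smul c x _ hx => rw [real_inner_smul_right, hx, mul_zero]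
  have hnormM : ‖M - PM‖ ^ 2 = m₃ ^ 2 := by
    rw [hPMv, ← real_inner_self_eq_norm_sq, hMp, inner_formula' hn _ _ hsZ2]
    simp [Fin.ext_iff]
    try ring
  -- part (ii): projection of Y
  have hYp : Y - ((y₁ - (y₃ / m₃) * m₁ - ((y₂ - (y₃ / m₃) * m₂) / x₂) * x₁) • e₁
      + (y₃ / m₃) • M + ((y₂ - (y₃ / m₃) * m₂) / x₂) • X) =
      (WithLp.toLp 2 (fun i => if i = (⟨3, by omega⟩ : Fin n) then y₄ else 0) : EuclideanSpace ℝ (Fin n)) := by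
    ext i
    simp only [PiLp.sub_apply, PiLp.add_apply, PiLp.smul_apply, smul_eq_mul, he₁, hX, hM, hY]
    by_cases h0 : i = (⟨0, by omega⟩ : Fin n)
    · simp [h0, Fin.ext_iff]
      try field_simp
      try ring
    · by_cases h1 : i = (⟨1, by omega⟩ : Fin n)
      · simp [h0, h1, Fin.ext_iff]
        try field_simp
        try ring
      · by_cases h2 : i = (⟨2, by omega⟩ : Fin n)
        · simp [h0, h1, h2, Fin.ext_iff]
          try field_simp
          try ring
        · by_cases h3 : i = (⟨3, by omega⟩ : Fin n)
          · simp [h0, h1, h2, h3, Fin.ext_iff]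
          · simp [h0, h1, h2, h3]
  have hsZ3 : ∀ i : Fin n, 4 ≤ (i : ℕ) →
      (WithLp.toLp 2 (fun i => if i = (⟨3, by omega⟩ : Fin n) then y₄ else 0) : EuclideanSpace ℝ (Fin n)) i = 0 := by
    intro i hi
    have h3 : i ≠ (⟨3, by omega⟩ : Fin n) := by simp [Fin.ext_iff]; omega
    simp [h3]
  have hZ3e : (inner ℝ (Y - ((y₁ - (y₃ / m₃) * m₁ - ((y₂ - (y₃ / m₃) * m₂) / x₂) * x₁) • e₁
      + (y₃ / m₃) • M + ((y₂ - (y₃ / m₃) * m₂) / x₂) • X)) e₁ : ℝ) = 0 := by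
    rw [hYp, inner_formula' hn _ _ hsZ3]; simp [he₁, Fin.ext_iff]
  have hZ3M : (inner ℝ (Y - ((y₁ - (y₃ / m₃) * m₁ - ((y₂ - (y₃ / m₃) * m₂) / x₂) * x₁) • e₁
      + (y₃ / m₃) • M + ((y₂ - (y₃ / m₃) * m₂) / x₂) • X)) M : ℝ) = 0 := by
    rw [hYp, inner_formula' hn _ _ hsZ3]; simp [hM, Fin.ext_iff]
  have hZ3X : (inner ℝ (Y - ((y₁ - (y₃ / m₃) * m₁ - ((y₂ - (y₃ / m₃) * m₂) / x₂) * x₁) • e₁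
      + (y₃ / m₃) • M + ((y₂ - (y₃ / m₃) * m₂) / x₂) • X)) X : ℝ) = 0 := by
    rw [hYp, inner_formula' hn _ _ hsZ3]; simp [hX, Fin.ext_iff]
  have hPYv : PY = (y₁ - (y₃ / m₃) * m₁ - ((y₂ - (y₃ / m₃) * m₂) / x₂) * x₁) • e₁
      + (y₃ / m₃) • M + ((y₂ - (y₃ / m₃) * m₂) / x₂) • X := by
    rw [hPY]
    refine Submodule.eq_starProjection_of_mem_of_inner_eq_zero ?_ ?_
    · exact Submodule.add_mem _
        (Submodule.add_mem _
          (Submodule.smul_mem _ _ (Submodule.subset_span (by simp)))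
          (Submodule.smul_mem _ _ (Submodule.subset_span (by simp))))
        (Submodule.smul_mem _ _ (Submodule.subset_span (by simp)))
    · intro w hw
      induction hw using Submodule.span_induction with
      | mem x hx =>
        rcases hx with h | h | h
        · rw [h]; exact hZ3e
        · rw [h]; exact hZ3M
        · rw [Set.mem_singleton_iff.mp h]; exact hZ3X
      | zero => exact inner_zero_right _
      | add x y _ _ hx hy => rw [inner_add_right, hx, hy, add_zero]
      | smul c x _ hx => rw [real_inner_smul_right, hx, mul_zero]
  have hnormY : ‖Y - PY‖ ^ 2 = y₄ ^ 2 := by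
    rw [hPYv, ← real_inner_self_eq_norm_sq, hYp, inner_formula' hn _ _ hsZ3]
    simp [Fin.ext_iff]
    try ring
  -- matrix computations
  have hn2 : ((n : ℝ) - 2) ≠ 0 := by
    have : (4 : ℝ) ≤ (n : ℝ) := by exact_mod_cast hn
    linarith
  have hn3 : ((n : ℝ) - 3) ≠ 0 := by
    have : (4 : ℝ) ≤ (n : ℝ) := by exact_mod_cast hn
    linarith
  have hG₂' : G₂ = Matrix.of ![![1, x₁], ![x₁, x₁ ^ 2 + x₂ ^ 2]] := by
    rw [hG₂, hee, heX, hXe, hXX]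
  have hdet₂ : G₂.det = x₂ ^ 2 := by
    rw [hG₂', Matrix.det_fin_two_of]; ring
  have hinv₂ : G₂⁻¹ 1 1 = (x₂ ^ 2)⁻¹ := by
    rw [Matrix.inv_def, hdet₂, hG₂', Matrix.adjugate_fin_two_of]
    simp [Ring.inverse_eq_inv']
  have hG₃' : G₃ = Matrix.of ![![1, m₁, x₁],
      ![m₁, m₁ ^ 2 + m₂ ^ 2 + m₃ ^ 2, m₁ * x₁ + m₂ * x₂],
      ![x₁, m₁ * x₁ + m₂ * x₂, x₁ ^ 2 + x₂ ^ 2]] := by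
    rw [hG₃, hee, heM, heX, hMe, hMM, hMX, hXe, hXM, hXX]
  have hdet₃ : G₃.det = x₂ ^ 2 * m₃ ^ 2 := by
    rw [hG₃', Matrix.det_fin_three]
    norm_num [Matrix.cons_val_two, Matrix.vecHead, Matrix.vecTail]
    ring
  have hinv₃ : G₃⁻¹ 1 1 = (x₂ ^ 2 * m₃ ^ 2)⁻¹ * x₂ ^ 2 := by
    rw [Matrix.inv_def, hdet₃, hG₃', Matrix.adjugate_fin_three_of]
    simp [Ring.inverse_eq_inv']
    try ring
    try tauto
  constructor
  · rw [hnormM, hinv₂]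
    rw [div_mul_eq_mul_div, div_eq_div_iff hn2 (mul_ne_zero hn2 (pow_ne_zero 2 hx₂'))]
    field_simp
    try ring
  · rw [hnormY, hinv₃]
    rw [show ((x₂ ^ 2 * m₃ ^ 2)⁻¹ * x₂ ^ 2 : ℝ) = (m₃ ^ 2)⁻¹ by
      rw [mul_inv]; field_simp]
    rw [div_mul_eq_mul_div, div_eq_div_iff hn3 (mul_ne_zero hn3 (pow_ne_zero 2 hm₃'))]
    field_simp
    try ring
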